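/- Quantum Cramér-Rao bound for a single parameter (measurement step): for any POVM {Π_x} on ℂ^n and any family of density matrices ρ_θ with SLD L (i.e., Lρ_θ + ρ_θ L = 2 ∂_θ ρ_θ), the classical Fisher information of the outcome distribution p(x,θ) = Tr(ρ_θ Π_x) satisfies C(θ) ≤ Tr(ρ_θ L²). -/

import Mathlib

open Matrix
open scoped ComplexOrder

private lemma conj_mul_re (a : ℂ) : ((starRingEnd ℂ) a * a).re = ‖a‖ ^ 2 := by
  rw [Complex.sq_norm]
  simp [Complex.mul_re, Complex.normSq_apply]

/-- Cauchy–Schwarz for the Hilbert–Schmidt inner product (real part, squared). -/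
private lemma trace_cs {n : ℕ} (A B : Matrix (Fin n) (Fin n) ℂ) :
    ((Aᴴ * B).trace.re)^2 ≤ (Aᴴ * A).trace.re * (Bᴴ * B).trace.re := by
  classical
  have key : ∀ M N : Matrix (Fin n) (Fin n) ℂ,
      (Mᴴ * N).trace.re
        = ∑ p : Fin n × Fin n, ((starRingEnd ℂ) (M p.2 p.1) * N p.2 p.1).re := by
    intro M N
    rw [Fintype.sum_prod_type]
    simp only [Matrix.trace, Matrix.diag, Matrix.mul_apply, Matrix.conjTranspose_apply,
      Complex.re_sum]
    rfl
  rw [key, key, key]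
  set f : Fin n × Fin n → ℝ := fun p => ‖A p.2 p.1‖ with hf
  set g : Fin n × Fin n → ℝ := fun p => ‖B p.2 p.1‖ with hg
  have h1 : (∑ p : Fin n × Fin n, ((starRingEnd ℂ) (A p.2 p.1) * B p.2 p.1).re) ^ 2
      ≤ (∑ p : Fin n × Fin n, f p * g p) ^ 2 := by
    rw [← sq_abs]
    apply pow_le_pow_left₀ (abs_nonneg _)
    calc |∑ p : Fin n × Fin n, ((starRingEnd ℂ) (A p.2 p.1) * B p.2 p.1).re|
        ≤ ∑ p : Fin n × Fin n, |((starRingEnd ℂ) (A p.2 p.1) * B p.2 p.1).re| :=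
          Finset.abs_sum_le_sum_abs _ _
      _ ≤ ∑ p : Fin n × Fin n, f p * g p := by
          apply Finset.sum_le_sum
          intro p _
          refine (Complex.abs_re_le_norm _).trans ?_
          rw [norm_mul, Complex.norm_conj]
  refine h1.trans ?_
  have h2 := Finset.sum_mul_sq_le_sq_mul_sq Finset.univ f g
  calc (∑ p : Fin n × Fin n, f p * g p) ^ 2
      ≤ (∑ p : Fin n × Fin n, f p ^ 2) * (∑ p : Fin n × Fin n, g p ^ 2) := h2
    _ = _ := by
        congr 1 <;> apply Finset.sum_congr rfl <;> intro p _ <;>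
          · simp only [hf, hg]; exact (conj_mul_re _).symm

theorem quantum_cramer_rao_measurement
    {n : ℕ} {X : Type*} [Fintype X]
    (Pi : X → Matrix (Fin n) (Fin n) ℂ)
    (ρ D L : Matrix (Fin n) (Fin n) ℂ)
    (hPipos : ∀ x, (Pi x).PosSemidef)
    (hPisum : ∑ x, Pi x = 1)
    (hρ : ρ.PosDef) (htr : ρ.trace = 1)
    (hD : D.IsHermitian) (hL : L.IsHermitian)
    (hSLD : L * ρ + ρ * L = (2 : ℂ) • D)
    (hppos : ∀ x, 0 < ((ρ * Pi x).trace).re) :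
    ∑ x, (((D * Pi x).trace).re)^2 / ((ρ * Pi x).trace).re
      ≤ ((ρ * (L * L)).trace).re := by
  classical
  open scoped MatrixOrder in
  set R := CFC.sqrt ρ with hRdef
  have hRherm : R.IsHermitian := (CFC.sqrt_nonneg ρ).posSemidef.1
  have hRR : R * R = ρ := CFC.sqrt_mul_sqrt_self ρ hρ.posSemidef.nonneg
  -- per-outcome bound: (Tr(D Π))² ≤ Tr(ρ Π) * Tr(Π L ρ L)
  have hx : ∀ x, (((D * Pi x).trace).re)^2
      ≤ ((ρ * Pi x).trace).re * (((Pi x) * (L * (ρ * L))).trace).re := by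
    intro x
    open scoped MatrixOrder in
    set Q := CFC.sqrt (Pi x) with hQdef
    have hQherm : Q.IsHermitian := (CFC.sqrt_nonneg (Pi x)).posSemidef.1
    have hQQ : Q * Q = Pi x := CFC.sqrt_mul_sqrt_self (Pi x) (hPipos x).nonneg
    have hcs := trace_cs (Q * R) (Q * (L * R))
    have e1 : (Q * R)ᴴ * (Q * (L * R)) = R * (Pi x * (L * R)) := by
      rw [conjTranspose_mul, hQherm.eq, hRherm.eq, ← hQQ]
      noncomm_ring
    have e2 : (Q * R)ᴴ * (Q * R) = R * (Pi x * R) := by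
      rw [conjTranspose_mul, hQherm.eq, hRherm.eq, ← hQQ]
      noncomm_ring
    have e3 : (Q * (L * R))ᴴ * (Q * (L * R)) = (R * L) * (Pi x * (L * R)) := by
      rw [conjTranspose_mul, conjTranspose_mul, hQherm.eq, hRherm.eq, hL.eq, ← hQQ]
      noncomm_ring
    rw [e1, e2, e3] at hcs
    -- identify the three traces
    have t2 : (R * (Pi x * R)).trace = (ρ * Pi x).trace := by
      rw [trace_mul_comm, Matrix.mul_assoc, hRR, trace_mul_comm]
    have t3 : ((R * L) * (Pi x * (L * R))).trace = ((Pi x) * (L * (ρ * L))).trace := by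
      rw [trace_mul_comm]
      rw [show Pi x * (L * R) * (R * L) = Pi x * (L * (R * R * L)) by noncomm_ring, hRR]
    have t1 : ((R * (Pi x * (L * R))).trace).re = ((D * Pi x).trace).re := by
      have hc : (R * (Pi x * (L * R))).trace = ((L * ρ) * Pi x).trace := by
        rw [trace_mul_comm]
        rw [show Pi x * (L * R) * R = Pi x * (L * (R * R)) by noncomm_ring, hRR]
        rw [trace_mul_comm, Matrix.mul_assoc]
      have hconj : ((ρ * L) * Pi x).trace = star (((L * ρ) * Pi x).trace) := by
        have h' : ((L * ρ * Pi x)ᴴ).trace = ((ρ * L) * Pi x).trace := by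
          rw [conjTranspose_mul, conjTranspose_mul, hρ.isHermitian.eq, hL.eq,
            (hPipos x).1.eq, trace_mul_comm]
        rw [← trace_conjTranspose]
        exact h'.symm
      have h2D : ((2 : ℂ) • D * Pi x).trace
          = ((L * ρ) * Pi x).trace + ((ρ * L) * Pi x).trace := by
        rw [← hSLD, add_mul, trace_add]
      have h2D' : (2 : ℝ) * ((D * Pi x).trace).re
          = (((L * ρ) * Pi x).trace).re + (((L * ρ) * Pi x).trace).re := by
        have := congrArg Complex.re h2D
        rw [hconj] at this
        simp only [smul_mul_assoc, trace_smul, Complex.re_ofNat, smul_eq_mul,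
          Complex.mul_re, Complex.add_re, Complex.star_def, Complex.conj_re] at this ⊢
        simpa using this
      rw [hc]
      linarith
    rw [t1, t2, t3] at hcs
    exact hcs
  -- sum up
  have hsum : ∑ x, (((Pi x) * (L * (ρ * L))).trace).re = ((ρ * (L * L)).trace).re := by
    have : ∑ x, ((Pi x) * (L * (ρ * L))).trace = ((ρ * (L * L))).trace := by
      rw [← trace_sum]
      rw [show ∑ x, Pi x * (L * (ρ * L)) = (∑ x, Pi x) * (L * (ρ * L)) by
        rw [Finset.sum_mul]]
      rw [hPisum, one_mul, ← mul_assoc, trace_mul_comm, ← mul_assoc, trace_mul_comm]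
    rw [← this, Complex.re_sum]
  rw [← hsum]
  apply Finset.sum_le_sum
  intro x _
  rw [div_le_iff₀ (hppos x)]
  rw [mul_comm]
  exact hx x
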